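/- In any finite directed graph, the maximal unitigs, viewed as sets of vertices, form a partition of the vertex set, and this partition is unique. -/

import Mathlib

/-- A unitig in a directed graph with edge relation `E`: a nonempty path in which
every vertex except the first has in-degree exactly 1 and every vertex except the
last has out-degree exactly 1. -/
def IsUnitig {V : Type*} (E : V → V → Prop) (p : List V) : Prop :=
  p ≠ [] ∧ p.Nodup ∧ p.Chain' E ∧
  (∀ v ∈ p.tail, ∃! u, E u v) ∧
  (∀ v ∈ p.dropLast, ∃! u, E v u)

/-- A source: a vertex with no incoming edges. -/
def IsSource {V : Type*} (E : V → V → Prop) (v : V) : Prop := ∀ u, ¬ E u v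

/-- A sink: a vertex with no outgoing edges. -/
def IsSink {V : Type*} (E : V → V → Prop) (v : V) : Prop := ∀ u, ¬ E v u

/-- An edge-covering walk: a walk traversing every edge of the graph at least once. -/
def IsECWalk {V : Type*} (E : V → V → Prop) (w : List V) : Prop :=
  w.Chain' E ∧ ∀ u v, E u v → [u, v] <:+: w

/-- A maximal unitig: a unitig that cannot be extended in either direction. -/
def IsMaximalUnitig {V : Type*} (E : V → V → Prop) (p : List V) : Prop :=
  IsUnitig E p ∧ ∀ v : V, ¬ IsUnitig E (v :: p) ∧ ¬ IsUnitig E (p ++ [v])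

section Aux
variable {V : Type*} (E : V → V → Prop)

/-- The "unitig edge" relation: an edge whose source has out-degree one and whose
target has in-degree one. -/
def NRel (u w : V) : Prop := E u w ∧ (∃! x, E u x) ∧ (∃! x, E x w)

variable {E}

lemma NRel_func {u w w' : V} (h : NRel E u w) (h' : NRel E u w') : w = w' :=
  (h.2.1.unique h.1 h'.1).symm ▸ rfl

lemma NRel_inj {u u' w : V} (h : NRel E u w) (h' : NRel E u' w) : u = u' :=
  h.2.2.unique h.1 h'.1

lemma isUnitig_iff {p : List V} :
    IsUnitig E p ↔ p ≠ [] ∧ p.Nodup ∧ p.Chain' (NRel E) := by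
  constructor
  · rintro ⟨hne, hnd, hch, hin, hout⟩
    refine ⟨hne, hnd, List.isChain_iff_getElem.2 fun i hi => ?_⟩
    rw [List.Chain', List.isChain_iff_getElem] at hch
    have hi1 : i + 1 < p.length := by omega
    have hi0 : i < p.length := by omega
    refine ⟨hch i hi, ?_, ?_⟩
    · have hm : p[i] ∈ p.dropLast := by
        rw [← List.getElem_dropLast (xs := p) (i := i) (by simp; omega)]
        exact List.getElem_mem _
      exact hout _ hm
    · have hm : p[i + 1] ∈ p.tail := by
        rw [← List.getElem_tail (l := p) (i := i) (by simp; omega)]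
        exact List.getElem_mem _
      exact hin _ hm
  · rintro ⟨hne, hnd, hch⟩
    rw [List.Chain', List.isChain_iff_getElem] at hch
    refine ⟨hne, hnd, List.isChain_iff_getElem.2 fun i hi => (hch i hi).1, ?_, ?_⟩
    · intro v hv
      obtain ⟨i, hi, hiv⟩ := List.mem_iff_getElem.1 hv
      rw [List.getElem_tail] at hiv
      have hi' : i < p.length - 1 := by simpa using hi
      have := hch i (by omega)
      rw [hiv] at this
      exact this.2.2
    · intro v hv
      obtain ⟨i, hi, hiv⟩ := List.mem_iff_getElem.1 hv
      rw [List.getElem_dropLast] at hiv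
      have hi' : i < p.length - 1 := by simpa using hi
      have := hch i (by omega)
      rw [hiv] at this
      exact this.2.1

lemma mem_of_nrel_right {q : List V} (hq : IsMaximalUnitig E q) {y z : V}
    (hy : y ∈ q) (hN : NRel E y z) : z ∈ q := by
  by_contra hz
  obtain ⟨hne, hnd, hch⟩ := isUnitig_iff.1 hq.1
  obtain ⟨i, hi, rfl⟩ := List.mem_iff_getElem.1 hy
  by_cases hil : i + 1 < q.length
  · have h1 := List.isChain_iff_getElem.1 hch i (by omega)
    have hzq : q[i + 1] = z := NRel_func h1 hN
    exact hz (hzq ▸ List.getElem_mem _)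
  · apply (hq.2 z).2
    refine isUnitig_iff.2 ⟨by simp, ?_, ?_⟩
    · simp only [List.nodup_append, List.nodup_cons, List.not_mem_nil, not_false_iff,
        List.nodup_nil, and_true, true_and]
      refine ⟨hnd, ?_⟩
      intro a ha
      simp only [List.mem_singleton]
      rintro _ rfl rfl
      exact hz ha
    · rw [List.Chain', List.isChain_append]
      refine ⟨hch, List.isChain_singleton _, ?_⟩
      intro a ha b hb
      rw [List.getLast?_eq_getLast hne] at ha
      simp only [Option.mem_some_iff, List.head?_cons] at ha hb
      have hla : q.getLast hne = q[i] := by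
        rw [List.getLast_eq_getElem]
        congr 1
        omega
      subst ha
      subst hb
      rw [hla]
      exact hN

lemma mem_of_nrel_left {q : List V} (hq : IsMaximalUnitig E q) {y z : V}
    (hy : y ∈ q) (hN : NRel E z y) : z ∈ q := by
  by_contra hz
  obtain ⟨hne, hnd, hch⟩ := isUnitig_iff.1 hq.1
  obtain ⟨i, hi, rfl⟩ := List.mem_iff_getElem.1 hy
  by_cases hil : 0 < i
  · have h1 := List.isChain_iff_getElem.1 hch (i - 1) (by omega)
    have hidx : i - 1 + 1 = i := by omega
    simp only [List.get_eq_getElem, hidx] at h1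
    have hzq : q[i - 1] = z := NRel_inj h1 hN
    exact hz (hzq ▸ List.getElem_mem _)
  · apply (hq.2 z).1
    refine isUnitig_iff.2 ⟨by simp, ?_, ?_⟩
    · rw [List.nodup_cons]
      exact ⟨hz, hnd⟩
    · rw [List.Chain', List.isChain_cons]
      refine ⟨?_, hch⟩
      intro b hb
      rw [List.head?_eq_head hne] at hb
      simp only [Option.mem_some_iff] at hb
      have hi0 : i = 0 := by omega
      subst hi0
      have hhd : q.head hne = q[0] := List.head_eq_getElem hne
      subst hb
      rw [hhd]
      exact hN

lemma fwd_cons {N : V → V → Prop} (s : Set V)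
    (hf : ∀ a b, N a b → a ∈ s → b ∈ s) :
    ∀ (l : List V) (v : V), List.Chain' N (v :: l) → v ∈ s → ∀ x ∈ v :: l, x ∈ s := by
  intro l
  induction l with
  | nil =>
    intro v _ hv x hx
    simp only [List.mem_singleton] at hx
    exact hx ▸ hv
  | cons b l ih =>
    intro v hch hv x hx
    rw [List.Chain', List.isChain_cons_cons] at hch
    rcases List.mem_cons.1 hx with rfl | hx
    · exact hv
    · exact ih b hch.2 (hf _ _ hch.1 hv) x hx

lemma chain_closure {p : List V} (hch : p.Chain' (NRel E)) (s : Set V)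
    (hf : ∀ a b, NRel E a b → a ∈ s → b ∈ s)
    (hb : ∀ a b, NRel E a b → b ∈ s → a ∈ s)
    {v : V} (hv : v ∈ p) (hvs : v ∈ s) : ∀ x ∈ p, x ∈ s := by
  obtain ⟨l1, l2, rfl⟩ := List.append_of_mem hv
  have hsuf : (v :: l2) <:+ (l1 ++ v :: l2) := ⟨l1, rfl⟩
  have hpre : (l1 ++ [v]) <+: (l1 ++ v :: l2) := ⟨l2, by simp⟩
  have hch2 : List.Chain' (NRel E) (v :: l2) := hch.suffix hsuf
  have hch1 : List.Chain' (NRel E) (l1 ++ [v]) := hch.prefix hpre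
  have hch1' : List.Chain' (flip (NRel E)) (v :: l1.reverse) := by
    rw [List.Chain', ← List.isChain_reverse]
    simpa [flip, List.Chain'] using hch1
  intro x hx
  rcases List.mem_append.1 hx with hx | hx
  · have := fwd_cons (N := flip (NRel E)) s (fun a b h hb' => hb b a h hb')
      l1.reverse v hch1' hvs
    exact this x (by simp [hx])
  · exact fwd_cons s hf l2 v hch2 hvs x hx

lemma exists_maximal [Fintype V] (E : V → V → Prop) (v : V) :
    ∃ p, IsMaximalUnitig E p ∧ v ∈ p := by
  classical
  set S := {p : List V | IsUnitig E p ∧ v ∈ p} with hSdef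
  have hS : [v] ∈ S := ⟨isUnitig_iff.2 ⟨by simp, by simp, List.isChain_singleton _⟩, by simp⟩
  set L := (fun p : List V => p.length) '' S with hLdef
  have hL : L.Nonempty := ⟨1, [v], hS, rfl⟩
  have hbdd : BddAbove L := by
    refine ⟨Fintype.card V, ?_⟩
    rintro n ⟨p, hp, rfl⟩
    exact hp.1.2.1.length_le_card
  obtain ⟨p, hpS, hplen0⟩ := Nat.sSup_mem hL hbdd
  have hplen : p.length = sSup L := hplen0
  refine ⟨p, ⟨hpS.1, ?_⟩, hpS.2⟩
  intro w
  constructor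
  · intro hw
    have hmem : (w :: p) ∈ S := ⟨hw, by simp [hpS.2]⟩
    have hle : (w :: p).length ≤ sSup L := le_csSup hbdd ⟨_, hmem, rfl⟩
    simp only [List.length_cons] at hle
    omega
  · intro hw
    have hmem : (p ++ [w]) ∈ S := ⟨hw, by simp [hpS.2]⟩
    have hle : (p ++ [w]).length ≤ sSup L := le_csSup hbdd ⟨_, hmem, rfl⟩
    simp only [List.length_append, List.length_singleton] at hle
    omega

lemma subset_of_mem {p q : List V} (hp : IsMaximalUnitig E p) (hq : IsMaximalUnitig E q)
    {a : V} (hap : a ∈ p) (haq : a ∈ q) : ∀ x ∈ p, x ∈ q :=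
  chain_closure (isUnitig_iff.1 hp.1).2.2 {x | x ∈ q}
    (fun _ _ h ha => mem_of_nrel_right hq ha h)
    (fun _ _ h hb => mem_of_nrel_left hq hb h) hap haq

end Aux

/-- In any finite directed graph, the maximal unitigs, viewed as sets of vertices,
form a partition of the vertex set (hence every vertex lies in exactly one block,
so the partition is unique). -/
theorem maximal_unitigs_partition {V : Type*} [Fintype V] (E : V → V → Prop) :
    Setoid.IsPartition
      {s : Set V | ∃ p : List V, IsMaximalUnitig E p ∧ s = {v | v ∈ p}} := by
  classical
  constructor
  · rintro ⟨p, hp, hset⟩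
    have hne := hp.1.1
    have hm : p.head hne ∈ p := List.head_mem hne
    have h0 : p.head hne ∈ (∅ : Set V) := by rw [hset]; exact hm
    simp at h0
  · intro a
    obtain ⟨p, hp, hap⟩ := exists_maximal E a
    refine ⟨{v | v ∈ p}, ⟨⟨p, hp, rfl⟩, hap⟩, ?_⟩
    rintro s ⟨⟨q, hq, rfl⟩, haq⟩
    ext x
    exact ⟨fun hx => subset_of_mem hq hp haq hap x hx,
      fun hx => subset_of_mem hp hq hap haq x hx⟩
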